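/- Let A be an n-by-n complex matrix and let m be a positive integer. Suppose that for each positive integer k there exists a real number a_k with \|A^k\|_1 \le a_k. Let p be a positive integer with 1 \le p \le m+1, let p_0 be a multiple of p satisfying m+1 \le p_0 \le m+1+p, and define \alpha_p = max{ a_k^{1/k} : k = p, m+1, m+2, \ldots, p_0 - 1, p_0 + 1, p_0 + 2, \ldots, m+1+p }. If 0 < \alpha_p < m+3, then the series remainder R'_m(A) = \sum_{k=m+1}^{\infty} A^k/(k+1)! satisfies the strict bound \|R'_m(A)\|_1 < (\alpha_p^{m+1}/(m+2)!) \cdot 1/(1 - \alpha_p/(m+3)). -/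

import Mathlib

/-- The matrix 1-norm of a complex square matrix: the operator norm induced by the vector
1-norm, i.e. the maximum absolute column sum `max_j ∑_i ‖A i j‖`. -/
noncomputable def matrixOneNorm {n : ℕ} (A : Matrix (Fin n) (Fin n) ℂ) : ℝ :=
  ⨆ j, ∑ i, ‖A i j‖

section Aux

open Matrix

attribute [local instance] Matrix.linftyOpNormedAddCommGroup Matrix.linftyOpNormedRing
  Matrix.linftyOpNormedSpace Matrix.linftyOpIsBoundedSMul

lemma matrixOneNorm_eq_norm_transpose {n : ℕ} (M : Matrix (Fin n) (Fin n) ℂ) :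
    matrixOneNorm M = ‖Mᵀ‖ := by
  rw [matrixOneNorm, Matrix.linfty_opNorm_def]
  rcases Nat.eq_zero_or_pos n with h | h
  · subst h
    simp [Real.iSup_of_isEmpty]
  · have : NeZero n := ⟨h.ne'⟩
    have hne : (Finset.univ : Finset (Fin n)).Nonempty := Finset.univ_nonempty
    rw [← Finset.sup'_univ_eq_ciSup, ← Finset.sup'_eq_sup hne,
      Finset.comp_sup'_eq_sup'_comp hne (fun x : NNReal => (x : ℝ))
        (fun x y => by simp)]
    refine Finset.sup'_congr hne rfl fun j _ => ?_
    simp [Function.comp, Matrix.transpose_apply, NNReal.coe_sum]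

theorem aux_main {n : ℕ} (A : Matrix (Fin n) (Fin n) ℂ)
    (m : ℕ) (hm : 0 < m) (a : ℕ → ℝ) (ha : ∀ k : ℕ, 0 < k → matrixOneNorm (A ^ k) ≤ a k)
    (p : ℕ) (hp1 : 1 ≤ p) (hpm : p ≤ m + 1)
    (p₀ : ℕ) (hp₀mul : p ∣ p₀) (hp₀l : m + 1 ≤ p₀) (hp₀u : p₀ ≤ m + 1 + p)
    (α : ℝ)
    (hα : α = (insert p ((Finset.Icc (m + 1) (m + 1 + p)).erase p₀)).sup'
        ⟨p, Finset.mem_insert_self p _⟩ (fun k => a k ^ ((k : ℝ)⁻¹)))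
    (hα0 : 0 < α) (hαlt : α < m + 3) :
    matrixOneNorm
        (∑' k : {k : ℕ // m + 1 ≤ k}, (Nat.factorial ((k : ℕ) + 1) : ℂ)⁻¹ • A ^ (k : ℕ)) <
      α ^ (m + 1) / (Nat.factorial (m + 2) : ℝ) * (1 / (1 - α / (m + 3))) := by
  set B := Aᵀ with hB
  have hb : ∀ k : ℕ, 0 < k → ‖B ^ k‖ ≤ a k := by
    intro k hk
    have h := ha k hk
    rwa [matrixOneNorm_eq_norm_transpose, Matrix.transpose_pow] at h
  set S := insert p ((Finset.Icc (m + 1) (m + 1 + p)).erase p₀) with hS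
  have hSbound : ∀ k ∈ S, 0 < k → ‖B ^ k‖ ≤ α ^ k := by
    intro k hk hk0
    have h1 : a k ^ ((k : ℝ)⁻¹) ≤ α := by
      rw [hα]; exact Finset.le_sup' (fun k => a k ^ ((k : ℝ)⁻¹)) hk
    have h2 : 0 ≤ a k := le_trans (norm_nonneg (B ^ k)) (hb k hk0)
    have h3 : a k ≤ α ^ k := by
      calc a k = (a k ^ ((k : ℝ)⁻¹)) ^ k := (Real.rpow_inv_natCast_pow h2 hk0.ne').symm
        _ ≤ α ^ k := pow_le_pow_left₀ (Real.rpow_nonneg h2 _) h1 k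
    exact (hb k hk0).trans h3
  have hBp : ‖B ^ p‖ ≤ α ^ p := hSbound p (Finset.mem_insert_self _ _) hp1
  have key : ∀ k : ℕ, m + 1 ≤ k → ‖B ^ k‖ ≤ α ^ k := by
    intro k hk
    by_cases hdvd : p ∣ k
    · obtain ⟨t, rfl⟩ := hdvd
      have ht : 0 < t := by
        rcases Nat.eq_zero_or_pos t with rfl | h
        · rw [Nat.mul_zero] at hk; omega
        · exact h
      calc ‖B ^ (p * t)‖ = ‖(B ^ p) ^ t‖ := by rw [pow_mul]
        _ ≤ ‖B ^ p‖ ^ t := norm_pow_le' _ ht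
        _ ≤ (α ^ p) ^ t := pow_le_pow_left₀ (norm_nonneg _) hBp t
        _ = α ^ (p * t) := (pow_mul α p t).symm
    · set r := m + 1 + (k - (m + 1)) % p with hr
      have hmod : (k - (m + 1)) % p < p := Nat.mod_lt _ hp1
      obtain ⟨q, hrk⟩ : ∃ q, k = r + p * q := by
        refine ⟨(k - (m + 1)) / p, ?_⟩
        have h := Nat.div_add_mod (k - (m + 1)) p
        omega
      have hrmem : r ∈ Finset.Icc (m + 1) (m + 1 + p) := by
        rw [Finset.mem_Icc]; omega
      have hrne : r ≠ p₀ := by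
        rintro hrp
        apply hdvd
        obtain ⟨s, hs⟩ := hp₀mul
        exact ⟨s + q, by rw [Nat.mul_add]; omega⟩
      have hrS : r ∈ S := Finset.mem_insert_of_mem (Finset.mem_erase.mpr ⟨hrne, hrmem⟩)
      have hBr : ‖B ^ r‖ ≤ α ^ r := hSbound r hrS (by omega)
      rcases Nat.eq_zero_or_pos q with rfl | hq0
      · rw [Nat.mul_zero, Nat.add_zero] at hrk
        rw [hrk]; exact hBr
      · calc ‖B ^ k‖ = ‖B ^ r * (B ^ p) ^ q‖ := by rw [← pow_mul, ← pow_add, ← hrk]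
          _ ≤ ‖B ^ r‖ * ‖(B ^ p) ^ q‖ := norm_mul_le _ _
          _ ≤ α ^ r * ‖B ^ p‖ ^ q := by
              refine mul_le_mul hBr (norm_pow_le' _ hq0) (norm_nonneg _) (by positivity)
          _ ≤ α ^ r * (α ^ p) ^ q := by
              have h1 := pow_le_pow_left₀ (norm_nonneg (B ^ p)) hBp q
              have h2 : (0:ℝ) ≤ α ^ r := by positivity
              nlinarith
          _ = α ^ k := by rw [← pow_mul, ← pow_add, ← hrk]
  -- series estimates
  set x : ℝ := α / (m + 3 : ℝ) with hx
  have hx0 : 0 ≤ x := by positivity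
  have hx1 : x < 1 := by
    rw [hx, div_lt_one (by positivity)]; exact hαlt
  set C : ℝ := α ^ (m + 1) / (Nat.factorial (m + 2) : ℝ) with hC
  have hC0 : 0 < C := by
    have := Nat.factorial_pos (m + 2)
    rw [hC]; positivity
  set g : ℕ → ℝ := fun j => C * x ^ j with hg
  have hgsum : Summable g := (summable_geometric_of_lt_one hx0 hx1).mul_left C
  set v : ℕ → ℝ := fun j => α ^ (m + 1 + j) / (Nat.factorial (m + 2 + j) : ℝ) with hv
  have hfactN : ∀ j : ℕ, Nat.factorial (m + 2) * (m + 3) ^ j ≤ Nat.factorial (m + 2 + j) := by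
    intro j
    induction j with
    | zero => simp
    | succ j ih =>
      have h1 : Nat.factorial (m + 2 + (j + 1)) = (m + 2 + j + 1) * Nat.factorial (m + 2 + j) := by
        have : m + 2 + (j + 1) = (m + 2 + j) + 1 := by omega
        rw [this, Nat.factorial_succ]
      rw [h1, pow_succ]
      calc Nat.factorial (m + 2) * ((m + 3) ^ j * (m + 3))
          = (m + 3) * (Nat.factorial (m + 2) * (m + 3) ^ j) := by ring
        _ ≤ (m + 2 + j + 1) * Nat.factorial (m + 2 + j) :=
            Nat.mul_le_mul (by omega) ih
  have hfact2 : Nat.factorial (m + 2) * (m + 3) ^ 2 < Nat.factorial (m + 2 + 2) := by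
    have h1 : Nat.factorial (m + 2 + 2) = (m + 4) * ((m + 3) * Nat.factorial (m + 2)) := by
      have e1 : m + 2 + 2 = (m + 3) + 1 := by omega
      rw [e1, Nat.factorial_succ, Nat.factorial_succ]
    rw [h1, pow_two]
    have := Nat.factorial_pos (m + 2)
    nlinarith
  have hgj : ∀ j : ℕ, g j = α ^ (m + 1 + j) / ((Nat.factorial (m + 2) : ℝ) * ((m : ℝ) + 3) ^ j) := by
    intro j
    have hf : (0:ℝ) < (Nat.factorial (m + 2) : ℝ) := by
      exact_mod_cast Nat.factorial_pos (m + 2)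
    have hm3 : (0:ℝ) < (m : ℝ) + 3 := by positivity
    simp only [hg, hC, hx]
    rw [div_pow, pow_add]
    field_simp
    ring
  have hfcast : ∀ j : ℕ, (Nat.factorial (m + 2) : ℝ) * ((m : ℝ) + 3) ^ j
      ≤ (Nat.factorial (m + 2 + j) : ℝ) := by
    intro j
    have := hfactN j
    exact_mod_cast this
  have hvg : ∀ j : ℕ, v j ≤ g j := by
    intro j
    rw [hv, hgj j]
    refine div_le_div_of_nonneg_left (by positivity) ?_ (hfcast j)
    positivity
  have hvg2 : v 2 < g 2 := by
    rw [hv, hgj 2]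
    refine div_lt_div_of_pos_left (by positivity) ?_ ?_
    · positivity
    · exact_mod_cast hfact2
  have hv0 : ∀ j : ℕ, 0 ≤ v j := by
    intro j
    have := Nat.factorial_pos (m + 2 + j)
    rw [hv]
    positivity
  have hvsum : Summable v := Summable.of_nonneg_of_le hv0 hvg hgsum
  -- the equivalence
  let e : ℕ ≃ {k : ℕ // m + 1 ≤ k} :=
    { toFun := fun j => ⟨m + 1 + j, Nat.le_add_right _ _⟩
      invFun := fun k => (k : ℕ) - (m + 1)
      left_inv := fun j => by simp
      right_inv := fun k => Subtype.ext (by have := k.2; simp; omega) }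
  set G : {k : ℕ // m + 1 ≤ k} → Matrix (Fin n) (Fin n) ℂ :=
    fun k => (Nat.factorial ((k : ℕ) + 1) : ℂ)⁻¹ • B ^ (k : ℕ) with hG
  have hGe : ∀ j : ℕ, ‖G (e j)‖ ≤ v j := by
    intro j
    have he : ((e j : {k : ℕ // m + 1 ≤ k}) : ℕ) = m + 1 + j := rfl
    rw [hG]
    simp only [he]
    rw [norm_smul]
    have h1 : ‖((Nat.factorial (m + 1 + j + 1) : ℂ))⁻¹‖
        = ((Nat.factorial (m + 1 + j + 1) : ℝ))⁻¹ := by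
      rw [norm_inv]
      norm_num
    rw [h1]
    have h2 : ‖B ^ (m + 1 + j)‖ ≤ α ^ (m + 1 + j) := key _ (by omega)
    have h3 : (0:ℝ) < (Nat.factorial (m + 1 + j + 1) : ℝ) := by
      exact_mod_cast Nat.factorial_pos _
    have h4 : m + 1 + j + 1 = m + 2 + j := by omega
    rw [hv]
    rw [h4] at h1 h3 ⊢
    calc ((Nat.factorial (m + 2 + j) : ℝ))⁻¹ * ‖B ^ (m + 1 + j)‖
        ≤ ((Nat.factorial (m + 2 + j) : ℝ))⁻¹ * α ^ (m + 1 + j) := by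
          have h4 : m + 1 + j + 1 = m + 2 + j := by omega
          rw [← h4]
          exact mul_le_mul_of_nonneg_left h2 (by positivity)
      _ = α ^ (m + 1 + j) / (Nat.factorial (m + 2 + j) : ℝ) := by
          rw [div_eq_inv_mul]
  have hunn : ∀ j : ℕ, 0 ≤ ‖G (e j)‖ := fun j => norm_nonneg _
  have husum : Summable (fun j => ‖G (e j)‖) := Summable.of_nonneg_of_le hunn hGe hvsum
  have hGsum : Summable (fun k => ‖G k‖) := by
    rw [← e.summable_iff]
    exact husum
  have key1 : matrixOneNorm
      (∑' k : {k : ℕ // m + 1 ≤ k}, (Nat.factorial ((k : ℕ) + 1) : ℂ)⁻¹ • A ^ (k : ℕ))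
      = ‖∑' k, G k‖ := by
    rw [matrixOneNorm_eq_norm_transpose, Matrix.transpose_tsum]
    refine congrArg _ (funext fun k => ?_)
    simp only [hG, hB, Matrix.transpose_smul, Matrix.transpose_pow]
  rw [key1]
  have step1 : ‖∑' k, G k‖ ≤ ∑' k, ‖G k‖ := norm_tsum_le_tsum_norm hGsum
  have step2 : ∑' k, ‖G k‖ = ∑' j, ‖G (e j)‖ := (e.tsum_eq (fun k => ‖G k‖)).symm
  have step3 : ∑' j, ‖G (e j)‖ ≤ ∑' j, v j := Summable.tsum_le_tsum hGe husum hvsum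
  have step4 : ∑' j, v j < ∑' j, g j := Summable.tsum_lt_tsum_of_nonneg hv0 hvg hvg2 hgsum
  have step5 : ∑' j, g j = C * (1 - x)⁻¹ := by
    rw [hg, tsum_mul_left, tsum_geometric_of_lt_one hx0 hx1]
  have : ‖∑' k, G k‖ < C * (1 - x)⁻¹ := by
    calc ‖∑' k, G k‖ ≤ ∑' j, ‖G (e j)‖ := step2 ▸ step1
      _ ≤ ∑' j, v j := step3
      _ < ∑' j, g j := step4
      _ = C * (1 - x)⁻¹ := step5
  calc ‖∑' k, G k‖ < C * (1 - x)⁻¹ := this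
    _ = α ^ (m + 1) / (Nat.factorial (m + 2) : ℝ) * (1 / (1 - α / (m + 3))) := by
        rw [hC, hx, one_div]

end Aux

/-- Theorem 3 of the paper.  Let `A` be an `n×n` complex matrix and `m ≥ 1`.
Suppose `‖A^k‖₁ ≤ a k` for every `k ≥ 1`.  Let `1 ≤ p ≤ m+1`, let `p₀` be a multiple of `p`
with `m+1 ≤ p₀ ≤ m+1+p`, and let
`α_p = max { (a k)^{1/k} : k = p, m+1, m+2, …, p₀-1, p₀+1, …, m+1+p }`.
If `0 < α_p < m+3`, then the remainder `R'_m(A) = ∑_{k=m+1}^∞ A^k/(k+1)!` satisfies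
`‖R'_m(A)‖₁ < (α_p^{m+1}/(m+2)!) · 1/(1 - α_p/(m+3))`. -/
theorem matrix_series_remainder_oneNorm_lt {n : ℕ} (A : Matrix (Fin n) (Fin n) ℂ)
    (m : ℕ) (hm : 0 < m) (a : ℕ → ℝ) (ha : ∀ k : ℕ, 0 < k → matrixOneNorm (A ^ k) ≤ a k)
    (p : ℕ) (hp1 : 1 ≤ p) (hpm : p ≤ m + 1)
    (p₀ : ℕ) (hp₀mul : p ∣ p₀) (hp₀l : m + 1 ≤ p₀) (hp₀u : p₀ ≤ m + 1 + p)
    (α : ℝ)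
    (hα : α = (insert p ((Finset.Icc (m + 1) (m + 1 + p)).erase p₀)).sup'
        ⟨p, Finset.mem_insert_self p _⟩ (fun k => a k ^ ((k : ℝ)⁻¹)))
    (hα0 : 0 < α) (hαlt : α < m + 3) :
    matrixOneNorm
        (∑' k : {k : ℕ // m + 1 ≤ k}, (Nat.factorial ((k : ℕ) + 1) : ℂ)⁻¹ • A ^ (k : ℕ)) <
      α ^ (m + 1) / (Nat.factorial (m + 2) : ℝ) * (1 / (1 - α / (m + 3))) := by
  exact aux_main A m hm a ha p hp1 hpm p₀ hp₀mul hp₀l hp₀u α hα hα0 hαlt
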